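/- Let B := {X ∈ GL(n,ℝ) : X is contracting}. Let X₁, X₂, X₃ ∈ B be such that X₃(X₂ᵀ)⁻¹X₁ is symmetric positive definite, and let X₂(·), X₃(·) : [0,1] → B be continuous paths with X₂(0) = X₂ and X₃(0) = X₃. Then there exists a continuous path X₁(·) : [0,1] → B with X₁(0) = X₁ such that X₃(t)(X₂(t)ᵀ)⁻¹X₁(t) is symmetric positive definite for every t ∈ [0,1]. -/

import Mathlib

open Matrix Polynomial

section helpers

variable {n : ℕ}

lemma charpoly_eval' {R : Type*} [CommRing R] (A : Matrix (Fin n) (Fin n) R) (μ : R) :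
    A.charpoly.eval μ = (Matrix.diagonal (fun _ => μ) - A).det := by
  rw [Matrix.charpoly, ← Polynomial.coe_evalRingHom, RingHom.map_det]
  congr 1
  ext i j
  by_cases h : i = j <;>
    simp [h, Matrix.charmatrix_apply, Matrix.diagonal, Matrix.sub_apply]

lemma isRoot_charpoly_iff {K : Type*} [Field K] (A : Matrix (Fin n) (Fin n) K) (μ : K) :
    A.charpoly.IsRoot μ ↔ ∃ v, v ≠ 0 ∧ A.mulVec v = μ • v := by
  rw [Polynomial.IsRoot, charpoly_eval', ← Matrix.exists_mulVec_eq_zero_iff]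
  constructor
  · rintro ⟨v, hv, h⟩
    refine ⟨v, hv, ?_⟩
    rw [Matrix.sub_mulVec] at h
    have h2 : (Matrix.diagonal (fun _ => μ)).mulVec v = μ • v := by
      funext i; simp [Matrix.mulVec_diagonal]
    rw [h2] at h
    linear_combination (norm := module) -h
  · rintro ⟨v, hv, h⟩
    refine ⟨v, hv, ?_⟩
    rw [Matrix.sub_mulVec]
    have h2 : (Matrix.diagonal (fun _ => μ)).mulVec v = μ • v := by
      funext i; simp [Matrix.mulVec_diagonal]
    rw [h2, h, sub_self]

lemma eig_pow {K : Type*} [Field K] (A : Matrix (Fin n) (Fin n) K) (μ : K) (v : Fin n → K)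
    (h : A.mulVec v = μ • v) (k : ℕ) : (A ^ k).mulVec v = μ ^ k • v := by
  induction k with
  | zero => simp [Matrix.one_mulVec]
  | succ k ih =>
      rw [pow_succ, ← Matrix.mulVec_mulVec, h, Matrix.mulVec_smul, ih, smul_smul,
        pow_succ, mul_comm]

/-- The entrywise `L¹` norm of a complex matrix. -/
noncomputable def mnorm (A : Matrix (Fin n) (Fin n) ℂ) : ℝ :=
  ∑ i, ∑ j, ‖A i j‖

lemma mnorm_nonneg (A : Matrix (Fin n) (Fin n) ℂ) : 0 ≤ mnorm A :=
  Finset.sum_nonneg fun _ _ => Finset.sum_nonneg fun _ _ => norm_nonneg _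

lemma abs_le_mnorm (A : Matrix (Fin n) (Fin n) ℂ) (μ : ℂ) (v : Fin n → ℂ)
    (hv : v ≠ 0) (h : A.mulVec v = μ • v) : ‖μ‖ ≤ mnorm A := by
  obtain ⟨j0, hj0⟩ : ∃ j, v j ≠ 0 := Function.ne_iff.mp hv
  obtain ⟨i0, -, hi0⟩ := Finset.exists_max_image Finset.univ
    (fun i => ‖v i‖) ⟨j0, Finset.mem_univ j0⟩
  have hvi0 : 0 < ‖v i0‖ :=
    lt_of_lt_of_le (norm_pos_iff.mpr hj0) (hi0 j0 (Finset.mem_univ j0))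
  have hrow : ‖μ‖ * ‖v i0‖ ≤
      (∑ j, ‖A i0 j‖) * ‖v i0‖ := by
    have h1 : (A.mulVec v) i0 = μ * v i0 := by rw [h]; simp
    rw [Matrix.mulVec, dotProduct] at h1
    calc ‖μ‖ * ‖v i0‖ = ‖∑ j, A i0 j * v j‖ := by
          rw [← norm_mul, ← h1]
      _ ≤ ∑ j, ‖A i0 j * v j‖ := norm_sum_le _ _
      _ ≤ (∑ j, ‖A i0 j‖) * ‖v i0‖ := by
          rw [Finset.sum_mul]
          refine Finset.sum_le_sum fun j _ => ?_
          rw [norm_mul]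
          exact mul_le_mul_of_nonneg_left (hi0 j (Finset.mem_univ j)) (norm_nonneg _)
  have hle : ‖μ‖ ≤ ∑ j, ‖A i0 j‖ :=
    le_of_mul_le_mul_right hrow hvi0
  refine hle.trans ?_
  exact Finset.single_le_sum (f := fun i => ∑ j, ‖A i j‖)
    (fun i _ => Finset.sum_nonneg fun _ _ => norm_nonneg _) (Finset.mem_univ i0)

lemma continuous_mnorm {X : Type*} [TopologicalSpace X]
    {A : X → Matrix (Fin n) (Fin n) ℂ} (hA : Continuous A) :
    Continuous fun x => mnorm (A x) := by
  unfold mnorm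
  refine continuous_finset_sum _ fun i _ => continuous_finset_sum _ fun j _ => ?_
  exact continuous_norm.comp ((continuous_apply j).comp ((continuous_apply i).comp hA))

end helpers

section gelfand

attribute [local instance] Matrix.linftyOpNormedRing Matrix.linftyOpNormedAlgebra

variable {n : ℕ}

lemma mem_spectrum_iff_isRoot (B : Matrix (Fin n) (Fin n) ℂ) (μ : ℂ) :
    μ ∈ spectrum ℂ B ↔ B.charpoly.IsRoot μ := by
  rw [spectrum.mem_iff, Polynomial.IsRoot, charpoly_eval']
  rw [Matrix.algebraMap_eq_diagonal]
  constructor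
  · intro h
    by_contra hdet
    exact h (Matrix.isUnit_iff_isUnit_det _ |>.mpr (isUnit_iff_ne_zero.mpr (by
      simpa [Pi.algebraMap_def] using hdet)))
  · intro h hu
    rw [Matrix.isUnit_iff_isUnit_det, isUnit_iff_ne_zero] at hu
    exact hu (by simpa [Pi.algebraMap_def] using h)

lemma mnorm_le_card_mul_norm (C : Matrix (Fin n) (Fin n) ℂ) : mnorm C ≤ n * ‖C‖ := by
  have hrow : ∀ i : Fin n, ∑ j, ‖C i j‖ ≤ ‖C‖ := by
    intro i
    have h1 : (∑ j, ‖C i j‖₊ : NNReal) ≤ ‖C‖₊ := by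
      rw [Matrix.linfty_opNNNorm_def]
      exact Finset.le_sup (f := fun i => ∑ j, ‖C i j‖₊) (Finset.mem_univ i)
    calc ∑ j, ‖C i j‖ = ((∑ j, ‖C i j‖₊ : NNReal) : ℝ) := by
          push_cast; rfl
      _ ≤ ‖C‖ := h1
  calc mnorm C ≤ ∑ _i : Fin n, ‖C‖ := Finset.sum_le_sum fun i _ => hrow i
    _ = n * ‖C‖ := by simp [Finset.sum_const, nsmul_eq_mul]

lemma exists_pow_mnorm_lt (B : Matrix (Fin n) (Fin n) ℂ)
    (hB : ∀ μ : ℂ, B.charpoly.IsRoot μ → ‖μ‖ < 1) :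
    ∃ k : ℕ, 1 ≤ k ∧ mnorm (B ^ k) < 1 := by
  haveI : CompleteSpace (Matrix (Fin n) (Fin n) ℂ) := FiniteDimensional.complete ℂ _
  have hspec : ∀ μ ∈ spectrum ℂ B, ‖μ‖₊ < 1 := by
    intro μ hμ
    rw [← NNReal.coe_lt_coe]
    push_cast
    exact hB μ ((mem_spectrum_iff_isRoot B μ).mp hμ)
  have hrad : spectralRadius ℂ B < 1 := by
    rcases (spectrum ℂ B).eq_empty_or_nonempty with h | h
    · simp [spectralRadius, h]
    · have := spectrum.spectralRadius_lt_of_forall_lt_of_nonempty h (r := 1) hspec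
      simpa using this
  have htend := spectrum.pow_nnnorm_pow_one_div_tendsto_nhds_spectralRadius B
  have hev : ∀ᶠ m : ℕ in Filter.atTop, (‖B ^ m‖₊ : ENNReal) ^ (1/(m:ℝ)) < 1 :=
    htend.eventually_lt_const hrad
  obtain ⟨m, hm, hm1⟩ := (hev.and (Filter.eventually_ge_atTop 1)).exists
  have hmlt : ‖B ^ m‖ < 1 := by
    by_contra hle
    push_neg at hle
    have h1 : (1 : ENNReal) ≤ (‖B ^ m‖₊ : ENNReal) := by
      rw [← ENNReal.coe_one, ENNReal.coe_le_coe, ← NNReal.coe_le_coe]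
      simpa using hle
    have h2 : (1 : ENNReal) ≤ (‖B ^ m‖₊ : ENNReal) ^ (1/(m:ℝ)) := by
      calc (1 : ENNReal) = 1 ^ (1/(m:ℝ)) := (ENNReal.one_rpow _).symm
        _ ≤ _ := ENNReal.rpow_le_rpow h1 (by positivity)
    exact absurd hm (not_lt.mpr h2)
  obtain ⟨j, hj⟩ := exists_pow_lt_of_lt_one
    (show (0:ℝ) < 1/(n+1) by positivity) hmlt
  have hnorm0 : (0:ℝ) ≤ ‖B ^ m‖ := norm_nonneg _
  have hj' : ‖B ^ m‖ ^ (j+1) < 1/(n+1) :=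
    lt_of_le_of_lt (pow_le_pow_of_le_one hnorm0 hmlt.le (Nat.le_succ j)) hj
  refine ⟨m * (j+1), Nat.one_le_iff_ne_zero.mpr (by positivity), ?_⟩
  have hb : ‖B ^ (m * (j+1))‖ ≤ ‖B ^ m‖ ^ (j+1) := by
    rw [pow_mul]
    exact norm_pow_le' _ (Nat.succ_pos j)
  calc mnorm (B ^ (m * (j+1))) ≤ n * ‖B ^ (m * (j+1))‖ := mnorm_le_card_mul_norm _
    _ ≤ n * (1/(n+1)) := mul_le_mul_of_nonneg_left (hb.trans hj'.le) (by positivity)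
    _ < 1 := by
        rw [mul_one_div, div_lt_one (by positivity)]
        linarith

end gelfand

/-- A real square matrix is contracting if every complex root of its characteristic
polynomial has absolute value strictly less than `1`. -/
def Contracting {n : ℕ} (A : Matrix (Fin n) (Fin n) ℝ) : Prop :=
  ∀ μ : ℂ, (A.map (algebraMap ℝ ℂ)).charpoly.IsRoot μ → ‖μ‖ < 1

theorem stmt19 (n : ℕ) (X₁ X₂ X₃ : Matrix (Fin n) (Fin n) ℝ)
    (h₁ : IsUnit X₁ ∧ Contracting X₁)
    (h₂ : IsUnit X₂ ∧ Contracting X₂)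
    (h₃ : IsUnit X₃ ∧ Contracting X₃)
    (hpd : (X₃ * X₂ᵀ⁻¹ * X₁).PosDef)
    (X₂p X₃p : unitInterval → Matrix (Fin n) (Fin n) ℝ)
    (hc₂ : Continuous X₂p) (hc₃ : Continuous X₃p)
    (hB₂ : ∀ t, IsUnit (X₂p t) ∧ Contracting (X₂p t))
    (hB₃ : ∀ t, IsUnit (X₃p t) ∧ Contracting (X₃p t))
    (h₂0 : X₂p 0 = X₂) (h₃0 : X₃p 0 = X₃) :
    ∃ X₁p : unitInterval → Matrix (Fin n) (Fin n) ℝ,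
      Continuous X₁p ∧ X₁p 0 = X₁ ∧
      ∀ t, (IsUnit (X₁p t) ∧ Contracting (X₁p t)) ∧
        (X₃p t * (X₂p t)ᵀ⁻¹ * X₁p t).PosDef := by
  classical
  set P : Matrix (Fin n) (Fin n) ℝ := X₃ * X₂ᵀ⁻¹ * X₁ with hPdef
  -- determinant facts
  have hdet₂ : ∀ t, IsUnit ((X₂p t)ᵀ).det := fun t => by
    rw [Matrix.det_transpose]
    exact (Matrix.isUnit_iff_isUnit_det _).mp (hB₂ t).1
  have hdet₃ : ∀ t, IsUnit (X₃p t).det := fun t =>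
    (Matrix.isUnit_iff_isUnit_det _).mp (hB₃ t).1
  have hdetX₂T : IsUnit (X₂ᵀ).det := by
    rw [Matrix.det_transpose]; exact (Matrix.isUnit_iff_isUnit_det _).mp h₂.1
  have hdetX₃ : IsUnit X₃.det := (Matrix.isUnit_iff_isUnit_det _).mp h₃.1
  have hPunit : IsUnit P := by
    refine (h₃.1.mul ?_).mul h₁.1
    exact Matrix.isUnit_nonsing_inv_iff.mpr ((Matrix.isUnit_iff_isUnit_det _).mpr hdetX₂T)
  -- the base path
  set M : unitInterval → Matrix (Fin n) (Fin n) ℝ :=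
    fun t => (X₂p t)ᵀ * ((X₃p t)⁻¹ * P) with hMdef
  have hprod : ∀ t, X₃p t * ((X₂p t)ᵀ)⁻¹ * M t = P := by
    intro t
    calc X₃p t * ((X₂p t)ᵀ)⁻¹ * ((X₂p t)ᵀ * ((X₃p t)⁻¹ * P))
        = X₃p t * ((((X₂p t)ᵀ)⁻¹ * (X₂p t)ᵀ) * ((X₃p t)⁻¹ * P)) := by
          simp only [Matrix.mul_assoc]
      _ = X₃p t * ((X₃p t)⁻¹ * P) := by
          rw [Matrix.nonsing_inv_mul _ (hdet₂ t), Matrix.one_mul]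
      _ = (X₃p t * (X₃p t)⁻¹) * P := by rw [Matrix.mul_assoc]
      _ = P := by rw [Matrix.mul_nonsing_inv _ (hdet₃ t), Matrix.one_mul]
  have hM0 : M 0 = X₁ := by
    rw [hMdef]
    simp only [h₂0, h₃0, hPdef]
    calc X₂ᵀ * (X₃⁻¹ * (X₃ * X₂ᵀ⁻¹ * X₁))
        = X₂ᵀ * ((X₃⁻¹ * X₃) * (X₂ᵀ⁻¹ * X₁)) := by simp only [Matrix.mul_assoc]
      _ = (X₂ᵀ * X₂ᵀ⁻¹) * X₁ := by
          rw [Matrix.nonsing_inv_mul _ hdetX₃, Matrix.one_mul, Matrix.mul_assoc]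
      _ = X₁ := by rw [Matrix.mul_nonsing_inv _ hdetX₂T, Matrix.one_mul]
  have hMunit : ∀ t, IsUnit (M t) := by
    intro t
    refine IsUnit.mul ?_ (IsUnit.mul ?_ hPunit)
    · rw [Matrix.isUnit_iff_isUnit_det]; exact hdet₂ t
    · exact Matrix.isUnit_nonsing_inv_iff.mpr (hB₃ t).1
  -- continuity of M
  have hMinv : Continuous fun t => (X₃p t)⁻¹ := by
    have h : (fun t => (X₃p t)⁻¹)
        = fun t => ((X₃p t).det)⁻¹ • (X₃p t).adjugate := by
      funext t
      rw [Matrix.inv_def, Ring.inverse_eq_inv']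
    rw [h]
    exact Continuous.smul ((hc₃.matrix_det).inv₀ fun t =>
      IsUnit.ne_zero (hdet₃ t)) (hc₃.matrix_adjugate)
  have hMC : Continuous M := by
    rw [hMdef]
    exact (hc₂.matrix_transpose).matrix_mul (hMinv.matrix_mul continuous_const)
  -- complexification
  set Mc : unitInterval → Matrix (Fin n) (Fin n) ℂ :=
    fun t => (M t).map (algebraMap ℝ ℂ) with hMcdef
  have hMcC : Continuous Mc := hMC.matrix_map (continuous_algebraMap ℝ ℂ)
  have hMc0 : Mc 0 = X₁.map (algebraMap ℝ ℂ) := by rw [hMcdef]; simp only [hM0]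
  -- Gelfand exponent for X₁
  obtain ⟨k, hk1, hklt⟩ := exists_pow_mnorm_lt (X₁.map (algebraMap ℝ ℂ)) h₁.2
  -- the function g
  set g : unitInterval → ℝ := fun t => mnorm ((Mc t) ^ k) with hgdef
  have hgC : Continuous g := continuous_mnorm ((continuous_pow k).comp hMcC)
  have hg0 : g 0 < 1 := by rw [hgdef]; simp only [hMc0]; exact hklt
  obtain ⟨ε, hε, hball⟩ : ∃ ε > 0, ∀ t : unitInterval, dist t 0 < ε → g t < 1 := by
    have hev : ∀ᶠ t in nhds (0 : unitInterval), g t < 1 :=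
      (hgC.tendsto 0).eventually_lt_const hg0
    rw [Metric.eventually_nhds_iff] at hev
    obtain ⟨ε, hε, h⟩ := hev
    exact ⟨ε, hε, fun t ht => h ht⟩
  have hδ : ∀ t : unitInterval, (t : ℝ) < ε → g t < 1 := by
    intro t ht
    refine hball t ?_
    rw [Subtype.dist_eq, Real.dist_eq]
    simpa [abs_of_nonneg t.2.1] using ht
  -- scaling function
  set N : unitInterval → ℝ := fun t => mnorm (Mc t) with hNdef
  have hNC : Continuous N := continuous_mnorm hMcC
  have hN0 : ∀ t, 0 ≤ N t := fun t => mnorm_nonneg _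
  set s : unitInterval → ℝ := fun t => min 1 ((t : ℝ) / ε) with hsdef
  have hsC : Continuous s := continuous_const.min (continuous_subtype_val.div_const ε)
  have hs0 : ∀ t, 0 ≤ s t := fun t =>
    le_min zero_le_one (div_nonneg t.2.1 hε.le)
  have hs1 : ∀ t, s t ≤ 1 := fun t => min_le_left _ _
  set c : unitInterval → ℝ := fun t => (1 + s t * N t)⁻¹ with hcdef
  have hden : ∀ t, 0 < 1 + s t * N t := fun t => by
    have := mul_nonneg (hs0 t) (hN0 t); linarith
  have hcC : Continuous c :=
    (continuous_const.add (hsC.mul hNC)).inv₀ fun t => (hden t).ne'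
  have hcpos : ∀ t, 0 < c t := fun t => inv_pos.mpr (hden t)
  have hcle1 : ∀ t, c t ≤ 1 := by
    intro t
    show (1 + s t * N t)⁻¹ ≤ 1
    refine inv_le_one_of_one_le₀ ?_
    have := mul_nonneg (hs0 t) (hN0 t); linarith
  have hs00 : s 0 = 0 := by
    show min 1 (((0 : unitInterval) : ℝ) / ε) = 0
    norm_num
  have hc0 : c 0 = 1 := by
    show (1 + s 0 * N 0)⁻¹ = 1
    rw [hs00]
    norm_num
  refine ⟨fun t => c t • M t, hcC.smul hMC, ?_, ?_⟩
  · show c 0 • M 0 = X₁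
    rw [hc0, hM0, one_smul]
  intro t
  have hunit : IsUnit (c t • M t) := by
    rw [Matrix.isUnit_iff_isUnit_det, Matrix.det_smul, isUnit_iff_ne_zero]
    exact mul_ne_zero (pow_ne_zero _ (hcpos t).ne')
      (IsUnit.ne_zero ((Matrix.isUnit_iff_isUnit_det _).mp (hMunit t)))
  have hmap : (c t • M t).map (algebraMap ℝ ℂ) = ((c t : ℝ) : ℂ) • Mc t := by
    ext i j
    show algebraMap ℝ ℂ (c t • M t i j) = ((c t : ℝ) : ℂ) • (M t).map (algebraMap ℝ ℂ) i j
    simp [Matrix.map_apply, smul_eq_mul]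
  refine ⟨⟨hunit, ?_⟩, ?_⟩
  · -- Contracting
    intro μ hroot
    rw [hmap] at hroot
    obtain ⟨v, hv, hev⟩ := (isRoot_charpoly_iff _ μ).mp hroot
    have hc0' : ((c t : ℝ) : ℂ) ≠ 0 := by
      exact_mod_cast (hcpos t).ne'
    rw [Matrix.smul_mulVec] at hev
    have heig : (Mc t).mulVec v = (((c t : ℝ) : ℂ)⁻¹ * μ) • v := by
      calc (Mc t).mulVec v
          = ((c t : ℝ) : ℂ)⁻¹ • (((c t : ℝ) : ℂ) • (Mc t).mulVec v) := by
            rw [smul_smul, inv_mul_cancel₀ hc0', one_smul]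
        _ = ((c t : ℝ) : ℂ)⁻¹ • (μ • v) := by rw [hev]
        _ = (((c t : ℝ) : ℂ)⁻¹ * μ) • v := smul_smul _ _ _
    set ν : ℂ := ((c t : ℝ) : ℂ)⁻¹ * μ with hνdef
    have habs : ‖μ‖ = c t * ‖ν‖ := by
      rw [hνdef, norm_mul, norm_inv, Complex.norm_real, Real.norm_eq_abs,
        abs_of_pos (hcpos t), ← mul_assoc, mul_inv_cancel₀ (hcpos t).ne', one_mul]
    rw [habs]
    rcases le_or_gt 1 ((t : ℝ) / ε) with hge | hlt
    · -- s t = 1, use the norm bound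
      have hν : ‖ν‖ ≤ N t := abs_le_mnorm _ _ _ hv heig
      have hct : c t = (1 + N t)⁻¹ := by
        rw [hcdef, hsdef]
        simp only [min_eq_left hge, one_mul]
      rw [hct]
      have hpos : (0:ℝ) < 1 + N t := by have := hN0 t; linarith
      calc (1 + N t)⁻¹ * ‖ν‖ ≤ (1 + N t)⁻¹ * N t :=
            mul_le_mul_of_nonneg_left hν (inv_nonneg.mpr hpos.le)
        _ < 1 := by
            rw [mul_comm, ← div_eq_mul_inv, div_lt_one hpos]
            linarith
    · -- t < ε, use the Gelfand bound
      have hg := hδ t ((div_lt_one hε).mp hlt)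
      have hpow : ((Mc t) ^ k).mulVec v = ν ^ k • v := eig_pow _ _ _ heig k
      have hνk : ‖ν‖ ^ k ≤ g t := by
        have := abs_le_mnorm _ (ν ^ k) v hv hpow
        rwa [norm_pow] at this
      have hν1 : ‖ν‖ < 1 := by
        by_contra hge1
        push_neg at hge1
        have h1 : (1:ℝ) ≤ ‖ν‖ ^ k := one_le_pow₀ hge1
        linarith
      calc c t * ‖ν‖ ≤ 1 * ‖ν‖ :=
            mul_le_mul_of_nonneg_right (hcle1 t) (norm_nonneg _)
        _ < 1 := by rwa [one_mul]
  · -- positive definiteness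
    have hps : X₃p t * ((X₂p t)ᵀ)⁻¹ * (c t • M t) = c t • P := by
      rw [Matrix.mul_smul, hprod t]
    rw [hps]
    refine ⟨?_, ?_⟩
    · show (c t • P)ᴴ = c t • P
      rw [Matrix.conjTranspose_smul]
      have : Pᴴ = P := hpd.1
      rw [this]
      congr 1
    · intro x hx
      have hq : (x.sum fun i xi => x.sum fun j xj => star xi * (c t • P) i j * xj)
          = c t * (x.sum fun i xi => x.sum fun j xj => star xi * P i j * xj) := by
        rw [Finsupp.mul_sum]
        refine Finsupp.sum_congr fun i _ => ?_
        rw [Finsupp.mul_sum]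
        refine Finsupp.sum_congr fun j _ => ?_
        simp only [Matrix.smul_apply, smul_eq_mul]
        ring
      rw [hq]
      exact mul_pos (hcpos t) (hpd.2 hx)
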